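/- Let λ > 0 and let b be a real number. If Z is exponentially distributed with rate λ, then E[max(ln Z, −b)] = −b + Γ(0, λ e^{−b}), where Γ(0, x) = ∫_x^∞ t^{−1} e^{−t} dt is the upper incomplete gamma function. Equivalently, for β > 1 and real B, E[max(log_β Z, −B)] = −B + Γ(0, λ β^{−B}) / ln β. -/

import Mathlib

open MeasureTheory ProbabilityTheory

/-- The upper incomplete gamma function at `0`: `Γ(0, x) = ∫_x^∞ t⁻¹ e^{-t} dt`. -/
noncomputable def upperGamma0 (x : ℝ) : ℝ := ∫ t in Set.Ioi x, t⁻¹ * Real.exp (-t)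

lemma upperGamma0_eq_integral_exp (K : ℝ) (hK : 0 < K) :
    upperGamma0 K = ∫ t in Set.Ioi (0:ℝ), Real.exp (-(K * Real.exp t)) := by
  have himg : (fun t : ℝ => K * Real.exp t) '' Set.Ioi 0 = Set.Ioi K := by
    ext u
    simp only [Set.mem_image, Set.mem_Ioi]
    constructor
    · rintro ⟨t, ht, rfl⟩
      nlinarith [Real.add_one_le_exp t, Real.exp_pos t]
    · intro hu
      have hu0 : 0 < u := hK.trans hu
      refine ⟨Real.log (u / K), Real.log_pos ((one_lt_div hK).mpr hu), ?_⟩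
      rw [Real.exp_log (by positivity)]
      field_simp
  have hderiv : ∀ x ∈ Set.Ioi (0:ℝ), HasDerivWithinAt (fun t : ℝ => K * Real.exp t)
      (K * Real.exp x) (Set.Ioi 0) x :=
    fun x _ => ((Real.hasDerivAt_exp x).const_mul K).hasDerivWithinAt
  have hinj : Set.InjOn (fun t : ℝ => K * Real.exp t) (Set.Ioi 0) := by
    intro x _ y _ h
    exact Real.exp_injective (mul_left_cancel₀ hK.ne' h)
  have := MeasureTheory.integral_image_eq_integral_abs_deriv_smul (F := ℝ)
      measurableSet_Ioi hderiv hinj (fun u => u⁻¹ * Real.exp (-u))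
  rw [upperGamma0, ← himg, this]
  refine setIntegral_congr_fun measurableSet_Ioi fun t _ => ?_
  have h1 : 0 < K * Real.exp t := by positivity
  rw [abs_of_pos h1, smul_eq_mul, ← mul_assoc, mul_inv_cancel₀ h1.ne', one_mul]

lemma integrableOn_exp_neg_mul_exp (K : ℝ) (hK : 0 < K) :
    IntegrableOn (fun t : ℝ => Real.exp (-(K * Real.exp t))) (Set.Ioi (0:ℝ)) := by
  refine Integrable.mono' (exp_neg_integrableOn_Ioi 0 hK) ?_ ?_
  · exact (Real.continuous_exp.comp
      ((continuous_const.mul Real.continuous_exp).neg)).aestronglyMeasurable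
  · refine (ae_restrict_iff' measurableSet_Ioi).mpr (ae_of_all _ fun t ht => ?_)
    rw [Real.norm_eq_abs, abs_of_pos (Real.exp_pos _), Real.exp_le_exp]
    have := Real.add_one_le_exp t
    nlinarith [le_of_lt (Set.mem_Ioi.mp ht)]

lemma expMeasure_Iic (lam : ℝ) (hlam : 0 < lam) (x : ℝ) :
    expMeasure lam (Set.Iic x)
      = ENNReal.ofReal (if 0 ≤ x then 1 - Real.exp (-(lam * x)) else 0) := by
  rw [show expMeasure lam = MeasureTheory.volume.withDensity (exponentialPDF lam) from rfl,
    withDensity_apply _ measurableSet_Iic, lintegral_exponentialPDF_eq_antiDeriv hlam]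

lemma expMeasure_Ioi (lam : ℝ) (hlam : 0 < lam) (x : ℝ) (hx : 0 ≤ x) :
    expMeasure lam (Set.Ioi x) = ENNReal.ofReal (Real.exp (-(lam * x))) := by
  haveI := isProbabilityMeasure_expMeasure hlam
  have h := measure_compl (μ := expMeasure lam) (measurableSet_Iic (a := x))
    (measure_ne_top _ _)
  rw [Set.compl_Iic] at h
  have hexp : Real.exp (-(lam * x)) ≤ 1 :=
    Real.exp_le_one_iff.mpr (neg_nonpos.mpr (mul_nonneg hlam.le hx))
  rw [h, measure_univ, expMeasure_Iic lam hlam x, if_pos hx, ← ENNReal.ofReal_one,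
    ← ENNReal.ofReal_sub _ (by linarith),
    show (1:ℝ) - (1 - Real.exp (-(lam * x))) = Real.exp (-(lam * x)) by ring]

lemma key_integral (lam : ℝ) (hlam : 0 < lam) (b : ℝ) :
    ∫ z, max (Real.log z) (-b) ∂(expMeasure lam)
      = -b + upperGamma0 (lam * Real.exp (-b)) := by
  haveI := isProbabilityMeasure_expMeasure hlam
  set ν := expMeasure lam with hν
  set K := lam * Real.exp (-b) with hKdef
  have hK : 0 < K := by positivity
  set f : ℝ → ℝ := fun z => max (Real.log z) (-b) + b with hf
  have hf_nn : ∀ z, 0 ≤ f z := fun z => by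
    have := le_max_right (Real.log z) (-b); simp only [hf]; linarith
  have hf_meas : Measurable f := (Real.measurable_log.max measurable_const).add measurable_const
  have hIic0 : ν (Set.Iic 0) = 0 := by
    rw [hν, expMeasure_Iic lam hlam 0]
    simp
  have hlevel : ∀ t ∈ Set.Ioi (0:ℝ),
      ν {z | t < f z} = ENNReal.ofReal (Real.exp (-(K * Real.exp t))) := by
    intro t ht
    have ht0 : 0 < t := Set.mem_Ioi.mp ht
    have hset1 : Set.Ioi (Real.exp (t - b)) ⊆ {z | t < f z} := by
      intro z hz
      have hz0 : 0 < z := lt_trans (Real.exp_pos _) hz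
      have h1 : t - b < Real.log z := (Real.lt_log_iff_exp_lt hz0).mpr hz
      have h2 := le_max_left (Real.log z) (-b)
      simp only [Set.mem_setOf_eq, hf]
      linarith
    have hset2 : {z | t < f z} ⊆ Set.Ioi (Real.exp (t - b)) ∪ Set.Iic 0 := by
      intro z hz
      by_cases hz0 : 0 < z
      · left
        simp only [Set.mem_setOf_eq, hf] at hz
        have h1 : t - b < max (Real.log z) (-b) := by linarith
        have h2 : t - b < Real.log z := by
          rcases lt_max_iff.mp h1 with h | h
          · exact h
          · linarith
        exact Set.mem_Ioi.mpr ((Real.lt_log_iff_exp_lt hz0).mp h2)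
      · exact Or.inr (le_of_not_gt hz0)
    have heq : ν {z | t < f z} = ν (Set.Ioi (Real.exp (t - b))) := by
      refine le_antisymm ?_ (measure_mono hset1)
      calc ν {z | t < f z} ≤ ν (Set.Ioi (Real.exp (t - b)) ∪ Set.Iic 0) := measure_mono hset2
        _ ≤ ν (Set.Ioi (Real.exp (t - b))) + ν (Set.Iic 0) := measure_union_le _ _
        _ = ν (Set.Ioi (Real.exp (t - b))) := by rw [hIic0, add_zero]
    rw [heq, hν, expMeasure_Ioi lam hlam _ (Real.exp_pos _).le]
    congr 2
    rw [hKdef, Real.exp_sub, Real.exp_neg]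
    field_simp
  have key0 : ∫⁻ z, ENNReal.ofReal (f z) ∂ν = ENNReal.ofReal (upperGamma0 K) := by
    rw [lintegral_eq_lintegral_meas_lt ν (ae_of_all _ hf_nn) hf_meas.aemeasurable,
      setLIntegral_congr_fun measurableSet_Ioi hlevel,
      ← ofReal_integral_eq_lintegral_ofReal (integrableOn_exp_neg_mul_exp K hK)
        (ae_of_all _ fun t => (Real.exp_pos _).le),
      upperGamma0_eq_integral_exp K hK]
  have hfi : Integrable f ν := by
    refine ⟨hf_meas.aestronglyMeasurable, ?_⟩
    rw [hasFiniteIntegral_iff_ofReal (ae_of_all _ hf_nn), key0]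
    exact ENNReal.ofReal_lt_top
  have hG_nn : 0 ≤ upperGamma0 K := by
    refine setIntegral_nonneg measurableSet_Ioi fun t ht => ?_
    have ht0 : 0 < t := hK.trans (Set.mem_Ioi.mp ht)
    exact mul_nonneg (inv_nonneg.mpr ht0.le) (Real.exp_pos _).le
  have hint : ∫ z, f z ∂ν = upperGamma0 K := by
    rw [integral_eq_lintegral_of_nonneg_ae (ae_of_all _ hf_nn) hf_meas.aestronglyMeasurable,
      key0, ENNReal.toReal_ofReal hG_nn]
  have hsplit : ∫ z, max (Real.log z) (-b) ∂ν = ∫ z, (f z - b) ∂ν := by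
    refine integral_congr_ae (ae_of_all _ fun z => ?_)
    simp [hf]
  rw [hsplit, integral_sub hfi (integrable_const b), hint, integral_const, probReal_univ,
    one_smul]
  ring

/-- If `Z` is exponentially distributed with rate `λ > 0`, then
`E[max (ln Z) (-b)] = -b + Γ(0, λ e^{-b})`; equivalently, for `β > 1` and real `B`,
`E[max (log_β Z) (-B)] = -B + Γ(0, λ β^{-B}) / ln β. -/
theorem exp_max_log_eq
    {Ω : Type*} [MeasurableSpace Ω] (μ : Measure Ω) [IsProbabilityMeasure μ]
    (lam : ℝ) (hlam : 0 < lam)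
    (Z : Ω → ℝ) (hZ : Measurable Z)
    (hlaw : Measure.map Z μ = expMeasure lam) :
    (∀ b : ℝ, ∫ ω, max (Real.log (Z ω)) (-b) ∂μ
        = -b + upperGamma0 (lam * Real.exp (-b)))
    ∧ ∀ β : ℝ, 1 < β → ∀ B : ℝ,
        ∫ ω, max (Real.logb β (Z ω)) (-B) ∂μ
          = -B + upperGamma0 (lam * β ^ (-B)) / Real.log β := by
  have part1 : ∀ b : ℝ, ∫ ω, max (Real.log (Z ω)) (-b) ∂μ
      = -b + upperGamma0 (lam * Real.exp (-b)) := by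
    intro b
    have hmeas : AEStronglyMeasurable (fun z : ℝ => max (Real.log z) (-b))
        (Measure.map Z μ) :=
      ((Real.measurable_log.max measurable_const)).aestronglyMeasurable
    rw [← integral_map hZ.aemeasurable hmeas, hlaw]
    exact key_integral lam hlam b
  refine ⟨part1, fun β hβ B => ?_⟩
  have hL : 0 < Real.log β := Real.log_pos hβ
  have hpow : Real.exp (-(B * Real.log β)) = β ^ (-B) := by
    rw [Real.rpow_def_of_pos (lt_trans one_pos hβ)]
    ring_nf
  have hptwise : ∀ z : ℝ, max (Real.logb β z) (-B)
      = max (Real.log z) (-(B * Real.log β)) / Real.log β := by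
    intro z
    have hB : -B = -(B * Real.log β) / Real.log β := by field_simp
    rw [← max_div_div_right hL.le, Real.log_div_log, ← hB]
  calc ∫ ω, max (Real.logb β (Z ω)) (-B) ∂μ
      = ∫ ω, max (Real.log (Z ω)) (-(B * Real.log β)) / Real.log β ∂μ := by
        simp_rw [hptwise]
    _ = (∫ ω, max (Real.log (Z ω)) (-(B * Real.log β)) ∂μ) / Real.log β := integral_div _ _
    _ = (-(B * Real.log β) + upperGamma0 (lam * β ^ (-B))) / Real.log β := by
        rw [part1 (B * Real.log β), hpow]
    _ = -B + upperGamma0 (lam * β ^ (-B)) / Real.log β := by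
        field_simp
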